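/- For n ∈ ℕ, 1 ≤ p ≤ n, and 0 ≤ l ≤ n-2 < r ≤ 2n-3 with l + r < 2n-2, the map reflecting an AST along its central column is a bijection between (n,l,r)-alternating sign pentagons P with ρ(P) = p and (n, 2n-3-r, 2n-3-l)-alternating sign pentagons T with ρ(T) = n+1-p. -/

import Mathlib

open Finset

/-- An alternating sign triangle of order `n`: a triangular array with rows `i = 1,…,n`,
row `i` occupying columns `i,…,2n-i` (so the central column is column `n`).
Entries outside this region are `0`. -/
structure AST (n : ℕ) where
  entry : ℕ → ℕ → ℤ
  support : ∀ i j, entry i j ≠ 0 → 1 ≤ i ∧ i ≤ n ∧ i ≤ j ∧ j ≤ 2 * n - i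
  entries : ∀ i j, entry i j = -1 ∨ entry i j = 0 ∨ entry i j = 1
  rowSum : ∀ i, 1 ≤ i → i ≤ n → ∑ j ∈ Icc i (2 * n - i), entry i j = 1
  altRow : ∀ i j₁ j₂, j₁ < j₂ → entry i j₁ ≠ 0 → entry i j₂ ≠ 0 →
      (∀ j, j₁ < j → j < j₂ → entry i j = 0) → entry i j₁ * entry i j₂ = -1
  altCol : ∀ j i₁ i₂, i₁ < i₂ → entry i₁ j ≠ 0 → entry i₂ j ≠ 0 →
      (∀ i, i₁ < i → i < i₂ → entry i j = 0) → entry i₁ j * entry i₂ j = -1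
  topOne : ∀ i j, entry i j ≠ 0 → (∀ i', i' < i → entry i' j = 0) → entry i j = 1

namespace AST

variable {n : ℕ} (T : AST n)

/-- The sum of the entries of column `j`. -/
def colSum (j : ℕ) : ℤ := ∑ i ∈ Icc 1 n, T.entry i j

/-- The bottom entry of column `j` (the entry of column `j` with the largest row index). -/
def bottom (j : ℕ) : ℤ := T.entry (min j (2 * n - j)) j

/-- A `1`-column: a column summing to `1`. -/
def IsOneCol (j : ℕ) : Prop := T.colSum j = 1

/-- An `11`-column: a `1`-column with bottom entry `1`. -/
def IsElevenCol (j : ℕ) : Prop := T.colSum j = 1 ∧ T.bottom j = 1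

/-- A `10`-column: a `1`-column with bottom entry `0`. -/
def IsTenCol (j : ℕ) : Prop := T.colSum j = 1 ∧ T.bottom j = 0

instance : DecidablePred T.IsOneCol := fun j =>
  inferInstanceAs (Decidable (T.colSum j = 1))
instance : DecidablePred T.IsElevenCol := fun j =>
  inferInstanceAs (Decidable (T.colSum j = 1 ∧ T.bottom j = 1))
instance : DecidablePred T.IsTenCol := fun j =>
  inferInstanceAs (Decidable (T.colSum j = 1 ∧ T.bottom j = 0))

/-- The statistic `ρ`: `1` + (number of `11`-columns strictly left of the central column)
+ (number of `10`-columns strictly right of the central column). -/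
def rho : ℕ :=
  1 + ((Icc 1 (n - 1)).filter T.IsElevenCol).card
    + ((Icc (n + 1) (2 * n - 1)).filter T.IsTenCol).card

end AST

/-- The label in `{0,…,2n-3}` of the non-central column with natural index
`j ∈ {1,…,2n-1} \ {n}` of an AST of order `n` (labels go left to right, skipping the
central column). -/
def AST.label (n j : ℕ) : ℕ := if j < n then j - 1 else j - 2

namespace AST

variable {n : ℕ} (T : AST n)

/-- `T` is an `(n,l,r)`-alternating sign pentagon: every non-central `1`-column has its
label between `l` and `r`. -/
def IsASP (l r : ℕ) : Prop :=
  ∀ j, 1 ≤ j → j ≤ 2 * n - 1 → j ≠ n → T.IsOneCol j → l ≤ AST.label n j ∧ AST.label n j ≤ r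

end AST

namespace AST

variable {n : ℕ}

theorem entry_ext {T S : AST n} (h : ∀ i j, T.entry i j = S.entry i j) : T = S := by
  have he : T.entry = S.entry := funext fun i => funext fun j => h i j
  cases T; cases S; simp only at he; subst he; rfl

lemma entry_zero_of_out (T : AST n) {i j : ℕ}
    (h : ¬(1 ≤ i ∧ i ≤ n ∧ i ≤ j ∧ j ≤ 2 * n - i)) : T.entry i j = 0 := by
  by_contra hc; exact h (T.support i j hc)

/-- Reflection of an AST along its central column. -/
def reflect (T : AST n) : AST n where
  entry i j := T.entry i (2 * n - j)
  support i j h := by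
    obtain ⟨h1, h2, h3, h4⟩ := T.support _ _ h
    omega
  entries i j := T.entries i _
  rowSum i hi1 hi2 := by
    rw [← T.rowSum i hi1 hi2]
    refine Finset.sum_nbij' (fun j => 2 * n - j) (fun j => 2 * n - j) ?_ ?_ ?_ ?_ ?_ <;>
      intro a ha <;> simp only [Finset.mem_Icc] at * <;> omega
  altRow i j₁ j₂ hlt h1 h2 hz := by
    have hs1 := T.support _ _ h1
    have hs2 := T.support _ _ h2
    have key := T.altRow i (2 * n - j₂) (2 * n - j₁) (by omega) h2 h1 (fun j hj1 hj2 => by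
      have h := hz (2 * n - j) (by omega) (by omega)
      rwa [show 2 * n - (2 * n - j) = j by omega] at h)
    linarith [key, mul_comm (T.entry i (2 * n - j₂)) (T.entry i (2 * n - j₁))]
  altCol j i₁ i₂ hlt h1 h2 hz := T.altCol (2 * n - j) i₁ i₂ hlt h1 h2 hz
  topOne i j h hz := T.topOne i (2 * n - j) h hz

@[simp] lemma reflect_entry (T : AST n) (i j : ℕ) :
    (reflect T).entry i j = T.entry i (2 * n - j) := rfl

lemma reflect_reflect (T : AST n) : T.reflect.reflect = T := by
  apply entry_ext
  intro i j
  rcases le_or_gt j (2 * n) with h | h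
  · simp [Nat.sub_sub_self h]
  · have h1 : T.entry i j = 0 := T.entry_zero_of_out (by omega)
    have h2 : T.entry i (2 * n - (2 * n - j)) = 0 := T.entry_zero_of_out (by omega)
    simpa [h2] using h1.symm

lemma reflect_colSum (T : AST n) (j : ℕ) : (reflect T).colSum j = T.colSum (2 * n - j) := rfl

lemma reflect_bottom (T : AST n) {j : ℕ} (hj : j ≤ 2 * n) :
    (reflect T).bottom j = T.bottom (2 * n - j) := by
  unfold bottom
  rw [reflect_entry]
  congr 1
  omega

/-- The alternating-column structure lemma: either all entries of column `j` up to row `m`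
vanish and the partial sum is `0`, or there is a last nonzero entry, and the partial sum
is `1` or `0` according to whether that entry is `1` or `-1`. -/
lemma colStruct (T : AST n) (j : ℕ) : ∀ m : ℕ,
    ((∑ i ∈ Finset.Icc 1 m, T.entry i j) = 0 ∧ ∀ i, 1 ≤ i → i ≤ m → T.entry i j = 0) ∨
    (∃ k, 1 ≤ k ∧ k ≤ m ∧ T.entry k j ≠ 0 ∧ (∀ i, k < i → i ≤ m → T.entry i j = 0) ∧
      ((T.entry k j = 1 ∧ (∑ i ∈ Finset.Icc 1 m, T.entry i j) = 1) ∨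
       (T.entry k j = -1 ∧ (∑ i ∈ Finset.Icc 1 m, T.entry i j) = 0))) := by
  intro m
  induction m with
  | zero => left; simp; omega
  | succ m ih =>
    have hsum : (∑ i ∈ Finset.Icc 1 (m + 1), T.entry i j)
        = (∑ i ∈ Finset.Icc 1 m, T.entry i j) + T.entry (m + 1) j :=
      Finset.sum_Icc_succ_top (by omega) _
    by_cases hz : T.entry (m + 1) j = 0
    · rcases ih with ⟨hs, hall⟩ | ⟨k, hk1, hkm, hk0, hafter, hv⟩
      · left
        refine ⟨by rw [hsum, hs, hz]; ring, fun i h1 h2 => ?_⟩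
        rcases eq_or_lt_of_le h2 with rfl | hlt
        · exact hz
        · exact hall i h1 (by omega)
      · right
        refine ⟨k, hk1, by omega, hk0, fun i hi1 hi2 => ?_, ?_⟩
        · rcases eq_or_lt_of_le hi2 with rfl | hlt
          · exact hz
          · exact hafter i hi1 (by omega)
        · rw [hsum, hz, add_zero]; exact hv
    · rcases ih with ⟨hs, hall⟩ | ⟨k, hk1, hkm, hk0, hafter, hv⟩
      · have h1 : T.entry (m + 1) j = 1 := T.topOne (m + 1) j hz (fun i' hi' => by
          rcases Nat.eq_zero_or_pos i' with rfl | hp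
          · exact T.entry_zero_of_out (by omega)
          · exact hall i' hp (by omega))
        right
        exact ⟨m + 1, by omega, le_refl _, hz, fun i hi1 hi2 => by omega,
          Or.inl ⟨h1, by rw [hsum, hs, h1]; ring⟩⟩
      · have hprod := T.altCol j k (m + 1) (by omega) hk0 hz
          (fun i hi1 hi2 => hafter i hi1 (by omega))
        right
        refine ⟨m + 1, by omega, le_refl _, hz, fun i hi1 hi2 => by omega, ?_⟩
        rcases hv with ⟨he, hs⟩ | ⟨he, hs⟩
        · have hm1 : T.entry (m + 1) j = -1 := by rw [he, one_mul] at hprod; exact hprod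
          right; exact ⟨hm1, by rw [hsum, hs, hm1]; ring⟩
        · have hm1 : T.entry (m + 1) j = 1 := by
            rw [he] at hprod
            rcases T.entries (m + 1) j with h | h | h <;> [skip; exact absurd h hz; exact h]
            rw [h] at hprod; norm_num at hprod
          left; exact ⟨hm1, by rw [hsum, hs, hm1]; ring⟩

lemma colSum_cases (T : AST n) (j : ℕ) : T.colSum j = 0 ∨ T.colSum j = 1 := by
  rcases colStruct T j n with ⟨hs, _⟩ | ⟨k, _, _, _, _, ⟨_, hs⟩ | ⟨_, hs⟩⟩
  · exact Or.inl hs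
  · exact Or.inr hs
  · exact Or.inl hs

lemma isOne_iff (T : AST n) (j : ℕ) : T.IsOneCol j ↔ T.IsElevenCol j ∨ T.IsTenCol j := by
  constructor
  · intro h
    have h' : (∑ i ∈ Finset.Icc 1 n, T.entry i j) = 1 := h
    rcases colStruct T j n with ⟨hs, _⟩ | ⟨k, hk1, hkn, hk0, hafter, hv⟩
    · rw [h'] at hs; norm_num at hs
    · have hkv : T.entry k j = 1 := by
        rcases hv with ⟨he, _⟩ | ⟨_, hs⟩
        · exact he
        · rw [h'] at hs; norm_num at hs
      by_cases hb : T.entry (min j (2 * n - j)) j = 0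
      · exact Or.inr ⟨h, hb⟩
      · have hkb : k ≤ min j (2 * n - j) := by
          have := T.support k j hk0; omega
        have hbn : min j (2 * n - j) ≤ n := by
          have := T.support _ _ hb; omega
        have hbk : min j (2 * n - j) = k := by
          by_contra hne
          exact hb (hafter _ (by omega) hbn)
        left
        exact ⟨h, by unfold bottom; rw [hbk]; exact hkv⟩
  · rintro (⟨h, _⟩ | ⟨h, _⟩) <;> exact h

lemma isOne_center (T : AST n) (hn : 1 ≤ n) : T.IsOneCol n := by
  have hnn : T.entry n n = 1 := by
    have := T.rowSum n hn (le_refl n)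
    rwa [show 2 * n - n = n by omega, Finset.Icc_self, Finset.sum_singleton] at this
  show (∑ i ∈ Finset.Icc 1 n, T.entry i n) = 1
  rcases colStruct T n n with ⟨_, hall⟩ | ⟨k, hk1, hkn, hk0, hafter, hv⟩
  · exact absurd (hall n hn (le_refl n)) (by rw [hnn]; norm_num)
  · have hkn' : k = n := by
      by_contra hne
      exact absurd (hafter n (by omega) (le_refl n)) (by rw [hnn]; norm_num)
    rcases hv with ⟨_, hs⟩ | ⟨he, _⟩
    · exact hs
    · rw [hkn', hnn] at he; norm_num at he

lemma card_oneCols (T : AST n) (hn : 1 ≤ n) :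
    ((Finset.Icc 1 (2 * n - 1)).filter T.IsOneCol).card = n := by
  have hrow : ∀ i ∈ Finset.Icc 1 n, (∑ j ∈ Finset.Icc 1 (2 * n - 1), T.entry i j) = 1 := by
    intro i hi
    rw [Finset.mem_Icc] at hi
    rw [← T.rowSum i hi.1 hi.2]
    refine (Finset.sum_subset ?_ ?_).symm
    · intro x hx
      rw [Finset.mem_Icc] at hx ⊢
      omega
    · intro x _ hx
      rw [Finset.mem_Icc] at hx
      exact T.entry_zero_of_out (by omega)
  have htot : (∑ j ∈ Finset.Icc 1 (2 * n - 1), T.colSum j) = (n : ℤ) := by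
    unfold colSum
    rw [Finset.sum_comm, Finset.sum_congr rfl hrow]
    simp
  have hsplit := Finset.sum_filter_add_sum_filter_not (Finset.Icc 1 (2 * n - 1))
    T.IsOneCol T.colSum
  have h1 : (∑ j ∈ (Finset.Icc 1 (2 * n - 1)).filter T.IsOneCol, T.colSum j)
      = (((Finset.Icc 1 (2 * n - 1)).filter T.IsOneCol).card : ℤ) := by
    rw [show ((((Finset.Icc 1 (2 * n - 1)).filter T.IsOneCol).card : ℤ))
      = ∑ _j ∈ (Finset.Icc 1 (2 * n - 1)).filter T.IsOneCol, (1 : ℤ) by simp]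
    exact Finset.sum_congr rfl (fun j hj => (Finset.mem_filter.mp hj).2)
  have h2 : (∑ j ∈ (Finset.Icc 1 (2 * n - 1)).filter (fun j => ¬ T.IsOneCol j), T.colSum j)
      = 0 := by
    apply Finset.sum_eq_zero
    intro j hj
    rcases T.colSum_cases j with h | h
    · exact h
    · exact absurd h (Finset.mem_filter.mp hj).2
  rw [h1, h2, htot] at hsplit
  exact_mod_cast hsplit

lemma card_one_split (T : AST n) (s : Finset ℕ) :
    (s.filter T.IsOneCol).card
      = (s.filter T.IsElevenCol).card + (s.filter T.IsTenCol).card := by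
  have h : s.filter T.IsOneCol = s.filter T.IsElevenCol ∪ s.filter T.IsTenCol := by
    rw [← Finset.filter_or]
    exact Finset.filter_congr (fun j _ => T.isOne_iff j)
  rw [h, Finset.card_union_of_disjoint]
  rw [Finset.disjoint_filter]
  rintro j _ ⟨_, hb1⟩ ⟨_, hb0⟩
  rw [hb1] at hb0
  norm_num at hb0

lemma reflect_eleven (T : AST n) {j : ℕ} (hj : j ≤ 2 * n) :
    (reflect T).IsElevenCol j ↔ T.IsElevenCol (2 * n - j) := by
  unfold IsElevenCol
  rw [reflect_colSum, reflect_bottom T hj]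

lemma reflect_ten (T : AST n) {j : ℕ} (hj : j ≤ 2 * n) :
    (reflect T).IsTenCol j ↔ T.IsTenCol (2 * n - j) := by
  unfold IsTenCol
  rw [reflect_colSum, reflect_bottom T hj]

lemma card_reflect_eleven (T : AST n) (hn : 1 ≤ n) :
    ((Finset.Icc 1 (n - 1)).filter (reflect T).IsElevenCol).card
      = ((Finset.Icc (n + 1) (2 * n - 1)).filter T.IsElevenCol).card := by
  apply Finset.card_nbij' (fun j => 2 * n - j) (fun j => 2 * n - j) <;>
    intro a ha <;> simp only [Finset.mem_coe, Finset.mem_filter, Finset.mem_Icc] at *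
  · exact ⟨by omega, (T.reflect_eleven (by omega)).mp ha.2⟩
  · refine ⟨by omega, (T.reflect_eleven (by omega)).mpr ?_⟩
    rw [show 2 * n - (2 * n - a) = a by omega]
    exact ha.2
  · omega
  · omega

lemma card_reflect_ten (T : AST n) (hn : 1 ≤ n) :
    ((Finset.Icc (n + 1) (2 * n - 1)).filter (reflect T).IsTenCol).card
      = ((Finset.Icc 1 (n - 1)).filter T.IsTenCol).card := by
  apply Finset.card_nbij' (fun j => 2 * n - j) (fun j => 2 * n - j) <;>
    intro a ha <;> simp only [Finset.mem_coe, Finset.mem_filter, Finset.mem_Icc] at *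
  · exact ⟨by omega, (T.reflect_ten (by omega)).mp ha.2⟩
  · refine ⟨by omega, (T.reflect_ten (by omega)).mpr ?_⟩
    rw [show 2 * n - (2 * n - a) = a by omega]
    exact ha.2
  · omega
  · omega

lemma card_one_interval_split (T : AST n) (hn : 1 ≤ n) :
    ((Finset.Icc 1 (n - 1)).filter T.IsOneCol).card
      + ((Finset.Icc (n + 1) (2 * n - 1)).filter T.IsOneCol).card = n - 1 := by
  have hdecomp : Finset.Icc 1 (2 * n - 1)
      = (Finset.Icc 1 (n - 1) ∪ Finset.Icc (n + 1) (2 * n - 1)) ∪ {n} := by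
    ext x
    simp only [Finset.mem_Icc, Finset.mem_union, Finset.mem_singleton]
    omega
  have hcard := T.card_oneCols hn
  rw [hdecomp, Finset.filter_union, Finset.filter_union] at hcard
  rw [Finset.card_union_of_disjoint, Finset.card_union_of_disjoint] at hcard
  · have hone : ({n} : Finset ℕ).filter T.IsOneCol = {n} := by
      rw [Finset.filter_singleton, if_pos (T.isOne_center hn)]
    rw [hone, Finset.card_singleton] at hcard
    omega
  · apply Finset.disjoint_filter_filter
    rw [Finset.disjoint_left]
    intro a ha hb
    simp only [Finset.mem_Icc] at ha hb
    omega
  · rw [Finset.disjoint_left]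
    intro a ha hb
    simp only [Finset.filter_union, Finset.mem_union, Finset.mem_filter,
      Finset.mem_Icc, Finset.mem_singleton] at ha hb
    omega

lemma rho_add_rho_reflect (T : AST n) (hn : 1 ≤ n) : T.rho + (reflect T).rho = n + 1 := by
  unfold rho
  rw [card_reflect_eleven T hn, card_reflect_ten T hn]
  have h1 := T.card_one_split (Finset.Icc 1 (n - 1))
  have h2 := T.card_one_split (Finset.Icc (n + 1) (2 * n - 1))
  have h3 := T.card_one_interval_split hn
  omega

lemma reflect_isASP (T : AST n) {l r : ℕ} (hr : r ≤ 2 * n - 3) (hT : T.IsASP l r) :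
    (reflect T).IsASP (2 * n - 3 - r) (2 * n - 3 - l) := by
  intro j hj1 hj2 hjn hone
  have hone' : T.IsOneCol (2 * n - j) := hone
  have h' := hT (2 * n - j) (by omega) (by omega) (by omega) hone'
  unfold AST.label at h' ⊢
  split_ifs at h' ⊢ <;> omega

lemma reflect_rho (T : AST n) (hn : 1 ≤ n) : (reflect T).rho = n + 1 - T.rho := by
  have := T.rho_add_rho_reflect hn
  omega

end AST


/-- For `1 ≤ p ≤ n`, `0 ≤ l ≤ n-2 < r ≤ 2n-3` with `l + r < 2n - 2`,
reflection along the central column is a bijection between `(n,l,r)`-ASPs `P` with `ρ(P) = p`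
and `(n, 2n-3-r, 2n-3-l)`-ASPs `T` with `ρ(T) = n + 1 - p`. -/
theorem reflection_bijection_ASP (n l r p : ℕ) (hp1 : 1 ≤ p) (hpn : p ≤ n)
    (hl : l + 2 ≤ n) (hr1 : n < r + 2) (hr2 : r + 3 ≤ 2 * n) (hlr : l + r + 2 < 2 * n) :
    ∃ e : {P : AST n // P.IsASP l r ∧ P.rho = p} ≃
          {T : AST n // T.IsASP (2 * n - 3 - r) (2 * n - 3 - l) ∧ T.rho = n + 1 - p},
      ∀ (P : {P : AST n // P.IsASP l r ∧ P.rho = p}) (i j : ℕ),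
        (e P).1.entry i j = P.1.entry i (2 * n - j) := by
  have hn : 1 ≤ n := by omega
  have key1 : ∀ P : AST n, P.IsASP l r ∧ P.rho = p →
      P.reflect.IsASP (2 * n - 3 - r) (2 * n - 3 - l) ∧ P.reflect.rho = n + 1 - p := by
    rintro P ⟨hasp, hrho⟩
    exact ⟨P.reflect_isASP (by omega) hasp, by rw [P.reflect_rho hn, hrho]⟩
  have key2 : ∀ T : AST n, T.IsASP (2 * n - 3 - r) (2 * n - 3 - l) ∧ T.rho = n + 1 - p →
      T.reflect.IsASP l r ∧ T.reflect.rho = p := by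
    rintro T ⟨hasp, hrho⟩
    constructor
    · have h := T.reflect_isASP (show 2 * n - 3 - l ≤ 2 * n - 3 by omega) hasp
      rwa [show 2 * n - 3 - (2 * n - 3 - r) = r by omega,
        show 2 * n - 3 - (2 * n - 3 - l) = l by omega] at h
    · rw [T.reflect_rho hn, hrho]; omega
  refine ⟨{
    toFun := fun P => ⟨P.1.reflect, key1 P.1 P.2⟩
    invFun := fun T => ⟨T.1.reflect, key2 T.1 T.2⟩
    left_inv := fun P => Subtype.ext (AST.reflect_reflect P.1)
    right_inv := fun T => Subtype.ext (AST.reflect_reflect T.1) }, fun P i j => rfl⟩
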